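/- In the Greedy Chamberlin–Courant (GreedyCC) rule, consider the election with disjoint candidate sets A = {a_1,…,a_k} and B = {b_1,…,b_k}, voters v_{i,j} (i,j ∈ [k]) approving {a_i, b_j}, one voter v^s with empty approval set, and tie-breaking order b_1 ≻ b_2 ≻ ⋯ ≻ b_k ≻ a_1 ≻ ⋯ ≻ a_k. Then GreedyCC outputs B as the winning size-k committee. If v^s's vote is changed to approve a_1, then GreedyCC outputs A. Hence GreedyCC is k-Add-robust. -/

import Mathlib

open Finset

/-- Marginal Chamberlin–Courant score of `c` w.r.t. current committee `W`:
the number of voters approving `c` and no member of `W`. -/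
def ccMarg {V C : Type*} [Fintype V] [DecidableEq C]
    (A : V → Finset C) (W : Finset C) (c : C) : ℕ :=
  (Finset.univ.filter (fun v => c ∈ A v ∧ ∀ b ∈ W, b ∉ A v)).card

/-- GreedyCC picks `c` next: `c` is unselected, maximizes the marginal CC score
among unselected candidates, and is earliest in the tie-breaking order `tb`
(smaller `tb` value = higher priority) among the maximizers. -/
def ccPicksNext {V C : Type*} [Fintype V] [DecidableEq C]
    (A : V → Finset C) (tb : C → ℕ) (W : Finset C) (c : C) : Prop :=
  c ∉ W ∧ (∀ d, d ∉ W → ccMarg A W d ≤ ccMarg A W c) ∧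
    (∀ d, d ∉ W → ccMarg A W d = ccMarg A W c → tb c ≤ tb d)

/-- `GreedyCCChain A tb n W`: `W` is the committee built by `n` iterations of GreedyCC. -/
def GreedyCCChain {V C : Type*} [Fintype V] [DecidableEq C]
    (A : V → Finset C) (tb : C → ℕ) : ℕ → Finset C → Prop
  | 0, W => W = ∅
  | n + 1, W => ∃ W' c, GreedyCCChain A tb n W' ∧ ccPicksNext A tb W' c ∧ W = insert c W'

/-- Candidates `a_1, …, a_k` (left) and `b_1, …, b_k` (right). -/
abbrev GCand (k : ℕ) := Fin k ⊕ Fin k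

def gAset (k : ℕ) : Finset (GCand k) := Finset.univ.image Sum.inl
def gBset (k : ℕ) : Finset (GCand k) := Finset.univ.image Sum.inr

/-- Tie-breaking order `b_1 ≻ ⋯ ≻ b_k ≻ a_1 ≻ ⋯ ≻ a_k` (smaller = preferred). -/
def gTb (k : ℕ) : GCand k → ℕ := Sum.elim (fun i => k + (i : ℕ)) (fun j => (j : ℕ))

/-- Voters `v_{i,j}` approving `{a_i, b_j}` and a voter `v^s` with empty approval set. -/
def gProfile (k : ℕ) : (Fin k × Fin k) ⊕ Unit → Finset (GCand k)
  | Sum.inl (i, j) => {Sum.inl i, Sum.inr j}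
  | Sum.inr _ => ∅

/-- The profile after adding an approval for `a_1` to `v^s`'s vote. -/
def gProfile' (k : ℕ) (hk : 0 < k) : (Fin k × Fin k) ⊕ Unit → Finset (GCand k) :=
  Function.update (gProfile k) (Sum.inr ())
    (insert (Sum.inl ⟨0, hk⟩) (gProfile k (Sum.inr ())))

-- helpers
lemma card_ge (k n : ℕ) : (univ.filter (fun j : Fin k => n ≤ (j:ℕ))).card = k - n := by
  have h2 := Finset.card_image_of_injective (univ.filter (fun j : Fin k => n ≤ (j:ℕ))) Fin.val_injective
  have : ((univ.filter (fun j : Fin k => n ≤ (j:ℕ))).image Fin.val) = Ico n k := by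
    ext m; simp [Fin.exists_iff]
  rw [this, Nat.card_Ico] at h2; omega

lemma gProfile'_inl (k : ℕ) (hk : 0 < k) (p : Fin k × Fin k) :
    gProfile' k hk (Sum.inl p) = {Sum.inl p.1, Sum.inr p.2} := by
  simp [gProfile', Function.update, gProfile]

lemma gProfile'_inr (k : ℕ) (hk : 0 < k) :
    gProfile' k hk (Sum.inr ()) = {Sum.inl ⟨0, hk⟩} := by
  simp [gProfile', gProfile]

def WB (k n : ℕ) : Finset (GCand k) := (univ.filter (fun j : Fin k => (j:ℕ) < n)).image Sum.inr
def WA (k n : ℕ) : Finset (GCand k) := (univ.filter (fun i : Fin k => (i:ℕ) < n)).image Sum.inl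

lemma mem_WB {k n : ℕ} {c : GCand k} : c ∈ WB k n ↔ ∃ j : Fin k, (j:ℕ) < n ∧ c = Sum.inr j := by
  simp [WB, eq_comm]
lemma mem_WA {k n : ℕ} {c : GCand k} : c ∈ WA k n ↔ ∃ i : Fin k, (i:ℕ) < n ∧ c = Sum.inl i := by
  simp [WA, eq_comm]

lemma margB_inl (k n : ℕ) (i : Fin k) :
    ccMarg (gProfile k) (WB k n) (Sum.inl i) = k - n := by
  have hset : ccMarg (gProfile k) (WB k n) (Sum.inl i)
      = ((univ.filter (fun j : Fin k => n ≤ (j:ℕ))).image (fun j => (Sum.inl (i, j) : (Fin k × Fin k) ⊕ Unit))).card := by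
    rw [ccMarg]
    congr 1
    ext v
    rcases v with ⟨i', j⟩ | u
    · simp only [mem_filter, mem_univ, true_and, gProfile, mem_WB, mem_image,
        Finset.mem_insert, Finset.mem_singleton]
      constructor
      · rintro ⟨h1, h2⟩
        rcases h1 with h | h
        · cases h
          refine ⟨j, ?_, rfl⟩
          by_contra hlt
          exact h2 (Sum.inr j) ⟨j, by omega, rfl⟩ (Or.inr rfl)
        · cases h
      · rintro ⟨j', hj', h⟩
        cases h
        refine ⟨Or.inl rfl, ?_⟩
        rintro b ⟨j'', hj'', rfl⟩ hb
        rcases hb with hb | hb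
        · cases hb
        · cases hb; omega
    · simp [gProfile]
  rw [hset, Finset.card_image_of_injective _ (fun a b h => by simpa using h), card_ge]

lemma margB_inr_ge (k n : ℕ) (j : Fin k) (hj : n ≤ (j:ℕ)) :
    ccMarg (gProfile k) (WB k n) (Sum.inr j) = k := by
  have hset : ccMarg (gProfile k) (WB k n) (Sum.inr j)
      = ((univ : Finset (Fin k)).image (fun i => (Sum.inl (i, j) : (Fin k × Fin k) ⊕ Unit))).card := by
    rw [ccMarg]
    congr 1
    ext v
    rcases v with ⟨i', j'⟩ | u
    · simp only [mem_filter, mem_univ, true_and, gProfile, mem_WB, mem_image,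
        Finset.mem_insert, Finset.mem_singleton]
      constructor
      · rintro ⟨h1, h2⟩
        rcases h1 with h | h
        · cases h
        · cases h; exact ⟨i', rfl⟩
      · rintro ⟨i, h⟩
        cases h
        refine ⟨Or.inr rfl, ?_⟩
        rintro b ⟨j'', hj'', rfl⟩ hb
        rcases hb with hb | hb
        · cases hb
        · cases hb; omega
    · simp [gProfile]
  rw [hset, Finset.card_image_of_injective _ (fun a b h => by simpa using h)]
  simp

lemma margB_inr_lt (k n : ℕ) (j : Fin k) (hj : (j:ℕ) < n) :
    ccMarg (gProfile k) (WB k n) (Sum.inr j) = 0 := by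
  have hset : ccMarg (gProfile k) (WB k n) (Sum.inr j)
      = (∅ : Finset ((Fin k × Fin k) ⊕ Unit)).card := by
    rw [ccMarg]
    congr 1
    rw [Finset.eq_empty_iff_forall_notMem]
    rintro (⟨i', j'⟩ | u) hv
    · simp only [mem_filter, mem_univ, true_and, gProfile, mem_WB,
        Finset.mem_insert, Finset.mem_singleton] at hv
      obtain ⟨h1, h2⟩ := hv
      rcases h1 with h | h
      · cases h
      · cases h
        exact h2 (Sum.inr j) ⟨j, hj, rfl⟩ (Or.inr rfl)
    · simp [gProfile] at hv
  rw [hset, Finset.card_empty]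

lemma margA'_inr (k n : ℕ) (hk : 0 < k) (j : Fin k) :
    ccMarg (gProfile' k hk) (WA k n) (Sum.inr j) = k - n := by
  have hset : ccMarg (gProfile' k hk) (WA k n) (Sum.inr j)
      = ((univ.filter (fun i : Fin k => n ≤ (i:ℕ))).image (fun i => (Sum.inl (i, j) : (Fin k × Fin k) ⊕ Unit))).card := by
    rw [ccMarg]
    congr 1
    ext v
    rcases v with ⟨i', j'⟩ | u
    · simp only [mem_filter, mem_univ, true_and, gProfile'_inl, mem_WA, mem_image,
        Finset.mem_insert, Finset.mem_singleton]
      constructor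
      · rintro ⟨h1, h2⟩
        rcases h1 with h | h
        · cases h
        · cases h
          refine ⟨i', ?_, rfl⟩
          by_contra hlt
          exact h2 (Sum.inl i') ⟨i', by omega, rfl⟩ (Or.inl rfl)
      · rintro ⟨i, hi, h⟩
        cases h
        refine ⟨Or.inr rfl, ?_⟩
        rintro b ⟨i'', hi'', rfl⟩ hb'
        rcases hb' with hb' | hb'
        · cases hb'; omega
        · cases hb'
    · cases u
      simp only [mem_filter, mem_univ, true_and, gProfile'_inr, mem_image,
        Finset.mem_singleton]
      constructor
      · rintro ⟨h1, _⟩; cases h1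
      · rintro ⟨i, _, h⟩; cases h
  rw [hset, Finset.card_image_of_injective _ (fun a b h => by simpa using h), card_ge]

lemma margA'_inl_ge (k n : ℕ) (hk : 0 < k) (hn : 1 ≤ n) (i : Fin k) (hi : n ≤ (i:ℕ)) :
    ccMarg (gProfile' k hk) (WA k n) (Sum.inl i) = k := by
  have hset : ccMarg (gProfile' k hk) (WA k n) (Sum.inl i)
      = ((univ : Finset (Fin k)).image (fun j => (Sum.inl (i, j) : (Fin k × Fin k) ⊕ Unit))).card := by
    rw [ccMarg]
    congr 1
    ext v
    rcases v with ⟨i', j'⟩ | u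
    · simp only [mem_filter, mem_univ, true_and, gProfile'_inl, mem_WA, mem_image,
        Finset.mem_insert, Finset.mem_singleton]
      constructor
      · rintro ⟨h1, h2⟩
        rcases h1 with h | h
        · cases h; exact ⟨j', rfl⟩
        · cases h
      · rintro ⟨j, h⟩
        cases h
        refine ⟨Or.inl rfl, ?_⟩
        rintro b ⟨i'', hi'', rfl⟩ hb'
        rcases hb' with hb' | hb'
        · cases hb'; omega
        · cases hb'
    · cases u
      simp only [mem_filter, mem_univ, true_and, gProfile'_inr, mem_WA, mem_image,
        Finset.mem_singleton]
      constructor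
      · rintro ⟨h1, h2⟩
        cases h1
        exact absurd (h2 (Sum.inl ⟨0, hk⟩) ⟨⟨0, hk⟩, hn, rfl⟩) (by simp)
      · rintro ⟨j, h⟩; cases h
  rw [hset, Finset.card_image_of_injective _ (fun a b h => by simpa using h)]
  simp

lemma margA'_zero_a0 (k : ℕ) (hk : 0 < k) :
    ccMarg (gProfile' k hk) (WA k 0) (Sum.inl ⟨0, hk⟩) = k + 1 := by
  have hWA : WA k 0 = ∅ := by
    rw [Finset.eq_empty_iff_forall_notMem]; intro c hc
    obtain ⟨i, hi, rfl⟩ := mem_WA.1 hc; omega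
  have hset : ccMarg (gProfile' k hk) (WA k 0) (Sum.inl ⟨0, hk⟩)
      = (insert (Sum.inr () : (Fin k × Fin k) ⊕ Unit)
          ((univ : Finset (Fin k)).image (fun j => (Sum.inl (⟨0, hk⟩, j) : (Fin k × Fin k) ⊕ Unit)))).card := by
    rw [ccMarg]
    congr 1
    ext v
    rcases v with ⟨i', j'⟩ | u
    · simp only [mem_filter, mem_univ, true_and, gProfile'_inl, hWA, Finset.notMem_empty,
        mem_insert, mem_image, Finset.mem_insert, Finset.mem_singleton]
      constructor
      · rintro ⟨h1, _⟩
        rcases h1 with h | h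
        · cases h; exact Or.inr ⟨j', rfl⟩
        · cases h
      · rintro (h | ⟨j, h⟩)
        · cases h
        · cases h; exact ⟨Or.inl rfl, by simp⟩
    · cases u
      simp [gProfile'_inr, hWA]
  rw [hset, Finset.card_insert_of_notMem (by simp),
    Finset.card_image_of_injective _ (fun a b h => by simpa using h)]
  simp

lemma margA'_zero_other (k : ℕ) (hk : 0 < k) (c : GCand k) (hc : c ≠ Sum.inl ⟨0, hk⟩) :
    ccMarg (gProfile' k hk) (WA k 0) c ≤ k := by
  rw [ccMarg]
  rcases c with i | j
  · refine le_trans (Finset.card_le_card (?_ : _ ⊆ (univ : Finset (Fin k)).image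
      (fun j => (Sum.inl (i, j) : (Fin k × Fin k) ⊕ Unit)))) ?_
    · rintro (⟨i', j'⟩ | u) hv
      · simp only [mem_filter, mem_univ, true_and, gProfile'_inl,
          Finset.mem_insert, Finset.mem_singleton] at hv
        rcases hv.1 with h | h
        · cases h; simp
        · cases h
      · cases u
        simp only [mem_filter, mem_univ, true_and, gProfile'_inr,
          Finset.mem_singleton] at hv
        exact absurd hv.1 hc
    · rw [Finset.card_image_of_injective _ (fun a b h => by simpa using h)]
      simp
  · refine le_trans (Finset.card_le_card (?_ : _ ⊆ (univ : Finset (Fin k)).image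
      (fun i => (Sum.inl (i, j) : (Fin k × Fin k) ⊕ Unit)))) ?_
    · rintro (⟨i', j'⟩ | u) hv
      · simp only [mem_filter, mem_univ, true_and, gProfile'_inl,
          Finset.mem_insert, Finset.mem_singleton] at hv
        rcases hv.1 with h | h
        · cases h
        · cases h; simp
      · cases u
        simp only [mem_filter, mem_univ, true_and, gProfile'_inr,
          Finset.mem_singleton] at hv
        cases hv.1
    · rw [Finset.card_image_of_injective _ (fun a b h => by simpa using h)]
      simp

lemma not_mem_WB {k n : ℕ} {j : Fin k} : Sum.inr j ∉ WB k n ↔ n ≤ (j:ℕ) := by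
  simp only [mem_WB, not_exists]
  constructor
  · intro h; by_contra hlt; exact h j ⟨by omega, rfl⟩
  · rintro h j' ⟨hj', he⟩; cases he; omega

lemma inl_not_mem_WB {k n : ℕ} (i : Fin k) : Sum.inl i ∉ WB k n := by
  simp only [mem_WB, not_exists]
  rintro j ⟨_, he⟩; cases he

lemma not_mem_WA {k n : ℕ} {i : Fin k} : Sum.inl i ∉ WA k n ↔ n ≤ (i:ℕ) := by
  simp only [mem_WA, not_exists]
  constructor
  · intro h; by_contra hlt; exact h i ⟨by omega, rfl⟩
  · rintro h i' ⟨hi', he⟩; cases he; omega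

lemma inr_not_mem_WA {k n : ℕ} (j : Fin k) : Sum.inr j ∉ WA k n := by
  simp only [mem_WA, not_exists]
  rintro i ⟨_, he⟩; cases he

lemma pickB (k n : ℕ) (hn : n < k) :
    ccPicksNext (gProfile k) (gTb k) (WB k n) (Sum.inr ⟨n, hn⟩) := by
  have hc : ccMarg (gProfile k) (WB k n) (Sum.inr ⟨n, hn⟩) = k :=
    margB_inr_ge k n ⟨n, hn⟩ (le_refl n)
  refine ⟨not_mem_WB.2 (le_refl n), ?_, ?_⟩
  · rintro (i | j) hd
    · rw [hc, margB_inl]; omega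
    · rw [hc, margB_inr_ge k n j (not_mem_WB.1 hd)]
  · rintro (i | j) hd he
    · rw [hc, margB_inl] at he
      simp only [gTb, Sum.elim_inl, Sum.elim_inr]
      omega
    · have := not_mem_WB.1 hd
      simp only [gTb, Sum.elim_inr]
      omega

lemma insertB (k n : ℕ) (hn : n < k) :
    insert (Sum.inr ⟨n, hn⟩ : GCand k) (WB k n) = WB k (n + 1) := by
  ext c
  simp only [Finset.mem_insert, mem_WB]
  constructor
  · rintro (rfl | ⟨j, hj, rfl⟩)
    · exact ⟨⟨n, hn⟩, by simp, rfl⟩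
    · exact ⟨j, by omega, rfl⟩
  · rintro ⟨j, hj, rfl⟩
    rcases Nat.lt_or_ge (j : ℕ) n with h | h
    · exact Or.inr ⟨j, h, rfl⟩
    · left; congr 1; apply Fin.ext; simp; omega

lemma pickA0 (k : ℕ) (hk : 0 < k) :
    ccPicksNext (gProfile' k hk) (gTb k) (WA k 0) (Sum.inl ⟨0, hk⟩) := by
  have hc := margA'_zero_a0 k hk
  refine ⟨not_mem_WA.2 (by omega), ?_, ?_⟩
  · intro d hd
    rcases eq_or_ne d (Sum.inl ⟨0, hk⟩) with rfl | hne
    · exact le_refl _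
    · rw [hc]; exact le_trans (margA'_zero_other k hk d hne) (by omega)
  · intro d hd he
    rcases eq_or_ne d (Sum.inl ⟨0, hk⟩) with rfl | hne
    · exact le_refl _
    · rw [hc] at he
      have := margA'_zero_other k hk d hne
      omega

lemma pickA (k n : ℕ) (hn : n < k) (h1 : 1 ≤ n) (hk : 0 < k) :
    ccPicksNext (gProfile' k hk) (gTb k) (WA k n) (Sum.inl ⟨n, hn⟩) := by
  have hc : ccMarg (gProfile' k hk) (WA k n) (Sum.inl ⟨n, hn⟩) = k :=
    margA'_inl_ge k n hk h1 ⟨n, hn⟩ (le_refl n)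
  refine ⟨not_mem_WA.2 (le_refl n), ?_, ?_⟩
  · rintro (i | j) hd
    · rw [hc, margA'_inl_ge k n hk h1 i (not_mem_WA.1 hd)]
    · rw [hc, margA'_inr]; omega
  · rintro (i | j) hd he
    · have := not_mem_WA.1 hd
      simp only [gTb, Sum.elim_inl]
      omega
    · rw [hc, margA'_inr] at he
      omega

lemma insertA (k n : ℕ) (hn : n < k) :
    insert (Sum.inl ⟨n, hn⟩ : GCand k) (WA k n) = WA k (n + 1) := by
  ext c
  simp only [Finset.mem_insert, mem_WA]
  constructor
  · rintro (rfl | ⟨i, hi, rfl⟩)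
    · exact ⟨⟨n, hn⟩, by simp, rfl⟩
    · exact ⟨i, by omega, rfl⟩
  · rintro ⟨i, hi, rfl⟩
    rcases Nat.lt_or_ge (i : ℕ) n with h | h
    · exact Or.inr ⟨i, h, rfl⟩
    · left; congr 1; apply Fin.ext; simp; omega

lemma WB_zero (k : ℕ) : WB k 0 = ∅ := by
  rw [Finset.eq_empty_iff_forall_notMem]
  intro c hc; obtain ⟨j, hj, rfl⟩ := mem_WB.1 hc; omega

lemma WA_zero (k : ℕ) : WA k 0 = ∅ := by
  rw [Finset.eq_empty_iff_forall_notMem]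
  intro c hc; obtain ⟨i, hi, rfl⟩ := mem_WA.1 hc; omega

lemma chainB (k : ℕ) : ∀ n, n ≤ k → GreedyCCChain (gProfile k) (gTb k) n (WB k n)
  | 0, _ => WB_zero k
  | n + 1, h => ⟨WB k n, Sum.inr ⟨n, h⟩, chainB k n (by omega), pickB k n h, (insertB k n h).symm⟩

lemma chainA (k : ℕ) (hk : 0 < k) :
    ∀ n, n ≤ k → GreedyCCChain (gProfile' k hk) (gTb k) n (WA k n)
  | 0, _ => WA_zero k
  | 1, h => ⟨WA k 0, Sum.inl ⟨0, hk⟩, WA_zero k, pickA0 k hk, (insertA k 0 hk).symm⟩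
  | n + 2, h => ⟨WA k (n+1), Sum.inl ⟨n+1, by omega⟩, chainA k hk (n+1) (by omega),
      pickA k (n+1) (by omega) (by omega) hk, (insertA k (n+1) (by omega)).symm⟩

lemma WB_top (k : ℕ) : WB k k = gBset k := by
  ext c
  simp only [mem_WB, gBset, mem_image, mem_univ, true_and]
  constructor
  · rintro ⟨j, _, rfl⟩; exact ⟨j, rfl⟩
  · rintro ⟨j, rfl⟩; exact ⟨j, j.isLt, rfl⟩

lemma WA_top (k : ℕ) : WA k k = gAset k := by
  ext c
  simp only [mem_WA, gAset, mem_image, mem_univ, true_and]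
  constructor
  · rintro ⟨i, _, rfl⟩; exact ⟨i, rfl⟩
  · rintro ⟨i, rfl⟩; exact ⟨i, i.isLt, rfl⟩

lemma gTb_inj (k : ℕ) : Function.Injective (gTb k) := by
  rintro (i | i) (j | j) h <;> simp only [gTb, Sum.elim_inl, Sum.elim_inr] at h
  · exact congrArg Sum.inl (Fin.ext (by omega))
  · exact absurd h (by have := j.isLt; omega)
  · exact absurd h (by have := i.isLt; omega)
  · exact congrArg Sum.inr (Fin.ext h)

lemma chain_unique {V C : Type*} [Fintype V] [DecidableEq C]
    (A : V → Finset C) (tb : C → ℕ) (htb : Function.Injective tb) :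
    ∀ n (W W' : Finset C), GreedyCCChain A tb n W → GreedyCCChain A tb n W' → W = W'
  | 0, W, W', h, h' => by rw [show W = ∅ from h, show W' = ∅ from h']
  | n + 1, W, W', ⟨U, c, hU, hp, hW⟩, ⟨U', c', hU', hp', hW'⟩ => by
    obtain rfl : U = U' := chain_unique A tb htb n U U' hU hU'
    obtain ⟨hc1, hc2, hc3⟩ := hp
    obtain ⟨hc1', hc2', hc3'⟩ := hp'
    have hle : ccMarg A U c' ≤ ccMarg A U c := hc2 c' hc1'
    have hge : ccMarg A U c ≤ ccMarg A U c' := hc2' c hc1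
    have heq : ccMarg A U c' = ccMarg A U c := le_antisymm hle hge
    have : c = c' := htb (le_antisymm (hc3 c' hc1' heq) (hc3' c hc1 heq.symm))
    rw [hW, hW', this]


/-- GreedyCC outputs `B` on the original election and `A` after a single
added approval; `A` and `B` are disjoint, hence GreedyCC is `k`-Add-robust. -/
theorem greedyCC_k_add_robust (k : ℕ) (hk : 0 < k) :
    GreedyCCChain (gProfile k) (gTb k) k (gBset k) ∧
    (∀ W : Finset (GCand k), GreedyCCChain (gProfile k) (gTb k) k W → W = gBset k) ∧
    GreedyCCChain (gProfile' k hk) (gTb k) k (gAset k) ∧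
    (∀ W : Finset (GCand k), GreedyCCChain (gProfile' k hk) (gTb k) k W → W = gAset k) ∧
    Disjoint (gAset k) (gBset k) := by
  have hB : GreedyCCChain (gProfile k) (gTb k) k (gBset k) := WB_top k ▸ chainB k k (le_refl k)
  have hA : GreedyCCChain (gProfile' k hk) (gTb k) k (gAset k) := WA_top k ▸ chainA k hk k (le_refl k)
  refine ⟨hB, fun W hW => chain_unique _ _ (gTb_inj k) k W _ hW hB,
    hA, fun W hW => chain_unique _ _ (gTb_inj k) k W _ hW hA, ?_⟩
  rw [Finset.disjoint_left]
  rintro c hc hc'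
  simp only [gAset, gBset, mem_image, mem_univ, true_and] at hc hc'
  obtain ⟨i, rfl⟩ := hc
  obtain ⟨j, h⟩ := hc'
  cases h
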